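/- Let φ be a positive CNF formula over variables X_1,…,X_m with nonempty clauses D_1,…,D_ℓ ⊆ {1,…,m}. For κ ∈ {1,2}, define the matrix M_κ ∈ {0,1}^{(2ℓ+κ)×m} whose rows 1,…,ℓ are the incidence rows of D_1,…,D_ℓ and whose remaining ℓ+κ rows are all-zero. Fix one of the three rankings (sum, max, lex) and write r(M_κ, C) for the permutation of the rows of M_κ given by that ranking restricted to the columns in C. Assume the clauses are indexed so that in the full-column ranking r(M_κ, {1,…,m}), row i precedes row i' whenever 1 ≤ i < i' ≤ ℓ. Then for every set of columns C ⊆ {1,…,m}: d_md(r(M_2, {1,…,m}), r(M_2, C)) − d_md(r(M_1, {1,…,m}), r(M_1, C)) equals 0 if α_C models φ, and equals 1 otherwise. -/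

import Mathlib

open Finset

/-- The rank of row `i` under keys `key` in ascending order with index tie-breaking:
`rank(i) = #{j : key j < key i} + #{j : key j = key i ∧ j ≤ i}` (ranks are `1, …, n`). -/
def rankOf {n : ℕ} {K : Type*} [LinearOrder K] (key : Fin n → K) (i : Fin n) : ℕ :=
  (Finset.univ.filter (fun j => key j < key i)).card +
    (Finset.univ.filter (fun j => key j = key i ∧ j ≤ i)).card

/-- The `n × m` matrix (with `n ≥ ℓ`) whose first `ℓ` rows are the incidence rows of the
clauses `D 1, …, D ℓ` and whose remaining rows are all-zero. -/
def clauseMat (ℓ m n : ℕ) (D : Fin ℓ → Finset (Fin m)) : Fin n → Fin m → ℕ :=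
  fun r j => if h : (r : ℕ) < ℓ then (if j ∈ D ⟨(r : ℕ), h⟩ then 1 else 0) else 0

/-- The "sum" key of row `r` restricted to the columns in `C`. -/
def sumKey {n m : ℕ} (M : Fin n → Fin m → ℕ) (C : Finset (Fin m)) : Fin n → ℕ :=
  fun r => ∑ j ∈ C, M r j

/-- The "max" key of row `r` restricted to the columns in `C` (maximum over `∅` is `0`). -/
def maxKey {n m : ℕ} (M : Fin n → Fin m → ℕ) (C : Finset (Fin m)) : Fin n → ℕ :=
  fun r => C.sup (fun j => M r j)

/-- The "lex" key of row `r`: the tuple of its entries in the columns of `C`, listed in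
increasing column order, compared lexicographically. -/
def lexKey {n m : ℕ} (M : Fin n → Fin m → ℕ) (C : Finset (Fin m)) : Fin n → List ℕ :=
  fun r => (C.sort (· ≤ ·)).map (fun j => M r j)

/-- The maximum displacement distance between two rank functions:
`d_md(π₁, π₂) = max_i |π₁(i) − π₂(i)|`. -/
def dMD {n : ℕ} (f g : Fin n → ℕ) : ℕ :=
  Finset.univ.sup (fun i => ((f i : ℤ) - (g i : ℤ)).natAbs)

/-- For a positive CNF formula with nonempty clauses `D 1, …, D ℓ ⊆ {1,…,m}`,
let `M_κ ∈ {0,1}^{(2ℓ+κ) × m}` (`κ ∈ {1,2}`) have the incidence rows of the clauses as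
its first `ℓ` rows and all-zero remaining rows.  For each of the rankings by sum, max and
lex keys: if the clauses are indexed so that in the full-column ranking of `M_κ` row `i`
precedes row `i'` whenever `i < i' ≤ ℓ`, then for every column set `C` the difference of
maximum displacement distances
`d_md(r(M_2, full), r(M_2, C)) − d_md(r(M_1, full), r(M_1, C))`
is `0` if `α_C` models the formula and `1` otherwise. -/
lemma card_lt_and {ℓ n : ℕ} (hn : ℓ ≤ n) (P : Fin n → Prop) [DecidablePred P] :
    (univ.filter fun j : Fin n => P j ∧ (j : ℕ) < ℓ).card
      = (univ.filter fun i : Fin ℓ => P (Fin.castLE hn i)).card := by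
  refine Finset.card_bij' (fun j hj => (⟨(j : ℕ), (Finset.mem_filter.mp hj).2.2⟩ : Fin ℓ))
    (fun i _ => Fin.castLE hn i) ?_ ?_ ?_ ?_
  · intro a ha
    simp only [Finset.mem_filter, Finset.mem_univ, true_and] at ha ⊢
    have : Fin.castLE hn (⟨(a : ℕ), ha.2⟩ : Fin ℓ) = a := by ext; rfl
    rw [this]; exact ha.1
  · intro b hb
    simp only [Finset.mem_filter, Finset.mem_univ, true_and] at hb ⊢
    exact ⟨hb, b.isLt⟩
  · intro a _; ext; rfl
  · intro b _; ext; rfl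

lemma card_lt' {ℓ n : ℕ} (hn : ℓ ≤ n) :
    (univ.filter fun j : Fin n => (j : ℕ) < ℓ).card = ℓ := by
  have := card_lt_and hn (fun _ => True)
  simp only [true_and] at this
  rw [this]; simp

lemma filter_split {n : ℕ} (ℓ : ℕ) (P : Fin n → Prop) [DecidablePred P] :
    (univ.filter P).card
      = (univ.filter fun j : Fin n => P j ∧ (j : ℕ) < ℓ).card
        + (univ.filter fun j : Fin n => P j ∧ ¬ (j : ℕ) < ℓ).card := by
  rw [← Finset.filter_filter, ← Finset.filter_filter,
    Finset.card_filter_add_card_filter_not]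

lemma card_ge_le {ℓ n : ℕ} (r : Fin n) (hr : ℓ ≤ (r : ℕ)) :
    (univ.filter fun j : Fin n => ¬ (j : ℕ) < ℓ ∧ j ≤ r).card = (r : ℕ) - ℓ + 1 := by
  have : (univ.filter fun j : Fin n => ¬ (j : ℕ) < ℓ ∧ j ≤ r).card
      = (Finset.Icc ℓ (r : ℕ)).card := by
    refine Finset.card_bij' (fun j _ => (j : ℕ)) (fun a ha => (⟨a, by
      have := Finset.mem_Icc.mp ha; omega⟩ : Fin n)) ?_ ?_ ?_ ?_
    · intro a ha
      simp only [Finset.mem_filter, Finset.mem_univ, true_and, Fin.le_def] at ha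
      rw [Finset.mem_Icc]; omega
    · intro b hb
      have := Finset.mem_Icc.mp hb
      simp only [Finset.mem_filter, Finset.mem_univ, true_and, Fin.le_def]
      constructor <;> omega
    · intro a _; ext; rfl
    · intro b _; rfl
  rw [this, Nat.card_Icc]; omega

lemma card_ge' {ℓ n : ℕ} (hn : ℓ ≤ n) :
    (univ.filter fun j : Fin n => ¬ (j : ℕ) < ℓ).card = n - ℓ := by
  have h := Finset.card_filter_add_card_filter_not
    (s := (univ : Finset (Fin n))) (p := fun j : Fin n => (j : ℕ) < ℓ)
  rw [card_lt' hn] at h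
  simp only [Finset.card_univ, Fintype.card_fin] at h
  omega

section Rank
variable {K : Type*} [LinearOrder K] {ℓ n : ℕ}

lemma rank_clause (hn : ℓ ≤ n) (z : K) (f : Fin ℓ → K) (key : Fin n → K)
    (hk : ∀ r : Fin n, key r = if h : (r : ℕ) < ℓ then f ⟨(r : ℕ), h⟩ else z)
    (r : Fin n) (i : Fin ℓ) (hri : (r : ℕ) = (i : ℕ)) (hzi : z < f i) :
    rankOf key r = (n - ℓ) + rankOf f i := by
  have hkr : key r = f i := by
    have h : (r : ℕ) < ℓ := hri ▸ i.isLt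
    rw [hk r, dif_pos h]
    congr 1
    exact Fin.ext hri
  have hkc : ∀ i' : Fin ℓ, key (Fin.castLE hn i') = f i' := fun i' => by
    rw [hk, dif_pos (show ((Fin.castLE hn i' : Fin n) : ℕ) < ℓ from i'.isLt)]
    exact congrArg f (Fin.ext rfl)
  have hkz : ∀ j : Fin n, ¬ (j : ℕ) < ℓ → key j = z := fun j h => by
    rw [hk, dif_neg h]
  unfold rankOf
  rw [hkr]
  have h1 : (univ.filter fun j : Fin n => key j < f i).card
      = (univ.filter fun i' : Fin ℓ => f i' < f i).card + (n - ℓ) := by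
    rw [filter_split ℓ, card_lt_and hn]
    congr 1
    · congr 1
      apply Finset.filter_congr
      intro x _
      rw [hkc x]
    · rw [← card_ge' (n := n) hn]
      congr 1
      apply Finset.filter_congr
      intro j _
      constructor
      · exact fun h => h.2
      · exact fun h => ⟨by rw [hkz j h]; exact hzi, h⟩
  have h2 : (univ.filter fun j : Fin n => key j = f i ∧ j ≤ r).card
      = (univ.filter fun i' : Fin ℓ => f i' = f i ∧ i' ≤ i).card := by
    rw [filter_split ℓ, card_lt_and hn]
    have hz : (univ.filter fun j : Fin n => (key j = f i ∧ j ≤ r) ∧ ¬ (j : ℕ) < ℓ) = ∅ := by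
      apply Finset.filter_eq_empty_iff.mpr
      intro j _
      intro hcon
      exact absurd (hcon.1.1) (by rw [hkz j hcon.2]; exact ne_of_lt hzi)
    rw [hz]
    simp only [Finset.card_empty, Nat.add_zero]
    congr 1
    apply Finset.filter_congr
    intro x _
    rw [hkc x]
    simp only [Fin.le_def, Fin.coe_castLE, hri]
  rw [h1, h2]
  omega

lemma rank_zero (hn : ℓ ≤ n) (z : K) (f : Fin ℓ → K) (key : Fin n → K)
    (hk : ∀ r : Fin n, key r = if h : (r : ℕ) < ℓ then f ⟨(r : ℕ), h⟩ else z)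
    (hz : ∀ i, z ≤ f i) (r : Fin n) (hr : ℓ ≤ (r : ℕ)) :
    rankOf key r = (univ.filter fun i : Fin ℓ => f i = z).card + ((r : ℕ) - ℓ) + 1 := by
  have hkc : ∀ i' : Fin ℓ, key (Fin.castLE hn i') = f i' := fun i' => by
    rw [hk, dif_pos (show ((Fin.castLE hn i' : Fin n) : ℕ) < ℓ from i'.isLt)]
    exact congrArg f (Fin.ext rfl)
  have hkz : ∀ j : Fin n, ¬ (j : ℕ) < ℓ → key j = z := fun j h => by
    rw [hk, dif_neg h]
  have hkr : key r = z := hkz r (by omega)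
  have hmin : ∀ j : Fin n, z ≤ key j := by
    intro j
    rw [hk]
    split
    · exact hz _
    · exact le_rfl
  unfold rankOf
  rw [hkr]
  have h1 : (univ.filter fun j : Fin n => key j < z) = ∅ := by
    apply Finset.filter_eq_empty_iff.mpr
    exact fun j _ => not_lt_of_ge (hmin j)
  have h2 : (univ.filter fun j : Fin n => key j = z ∧ j ≤ r).card
      = (univ.filter fun i : Fin ℓ => f i = z).card + ((r : ℕ) - ℓ + 1) := by
    rw [filter_split ℓ, card_lt_and hn]
    congr 1
    · congr 1
      apply Finset.filter_congr
      intro x _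
      rw [hkc x]
      simp only [Fin.le_def, Fin.coe_castLE]
      constructor
      · exact fun h => h.1
      · intro h
        refine ⟨h, ?_⟩
        have := x.isLt
        omega
    · rw [← card_ge_le r hr]
      congr 1
      apply Finset.filter_congr
      intro j _
      constructor
      · exact fun h => ⟨h.2, h.1.2⟩
      · exact fun h => ⟨⟨hkz j h.1, h.2⟩, h.1⟩
  rw [h1, h2]
  simp only [Finset.card_empty]
  omega

lemma rank_violated (hn : ℓ ≤ n) (z : K) (f : Fin ℓ → K) (key : Fin n → K)
    (hk : ∀ r : Fin n, key r = if h : (r : ℕ) < ℓ then f ⟨(r : ℕ), h⟩ else z)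
    (hz : ∀ i, z ≤ f i) (r : Fin n) (i : Fin ℓ) (hri : (r : ℕ) = (i : ℕ)) (hvi : f i = z) :
    rankOf key r = (univ.filter fun i' : Fin ℓ => f i' = z ∧ i' ≤ i).card := by
  have hkc : ∀ i' : Fin ℓ, key (Fin.castLE hn i') = f i' := fun i' => by
    rw [hk, dif_pos (show ((Fin.castLE hn i' : Fin n) : ℕ) < ℓ from i'.isLt)]
    exact congrArg f (Fin.ext rfl)
  have hkz : ∀ j : Fin n, ¬ (j : ℕ) < ℓ → key j = z := fun j h => by
    rw [hk, dif_neg h]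
  have hkr : key r = z := by
    have h : (r : ℕ) < ℓ := hri ▸ i.isLt
    rw [hk r, dif_pos h, show (⟨(r : ℕ), h⟩ : Fin ℓ) = i from Fin.ext hri, hvi]
  have hmin : ∀ j : Fin n, z ≤ key j := by
    intro j
    rw [hk]
    split
    · exact hz _
    · exact le_rfl
  unfold rankOf
  rw [hkr]
  have h1 : (univ.filter fun j : Fin n => key j < z) = ∅ := by
    apply Finset.filter_eq_empty_iff.mpr
    exact fun j _ => not_lt_of_ge (hmin j)
  have h2 : (univ.filter fun j : Fin n => key j = z ∧ j ≤ r).card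
      = (univ.filter fun i' : Fin ℓ => f i' = z ∧ i' ≤ i).card := by
    rw [filter_split ℓ, card_lt_and hn]
    have hz2 : (univ.filter fun j : Fin n => (key j = z ∧ j ≤ r) ∧ ¬ (j : ℕ) < ℓ) = ∅ := by
      apply Finset.filter_eq_empty_iff.mpr
      intro j _ hcon
      have : (j : ℕ) ≤ (r : ℕ) := hcon.1.2
      have : (r : ℕ) < ℓ := hri ▸ i.isLt
      omega
    rw [hz2]
    simp only [Finset.card_empty, Nat.add_zero]
    congr 1
    apply Finset.filter_congr
    intro x _
    rw [hkc x]
    simp only [Fin.le_def, Fin.coe_castLE, hri]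
  rw [h1, h2]
  simp

lemma rankOf_pos {f : Fin n → K} (i : Fin n) : 1 ≤ rankOf f i := by
  unfold rankOf
  have : i ∈ univ.filter (fun j : Fin n => f j = f i ∧ j ≤ i) := by simp
  have := Finset.card_pos.mpr ⟨i, this⟩
  omega

lemma rankOf_le {f : Fin n → K} (i : Fin n) : rankOf f i ≤ n := by
  unfold rankOf
  have hd : Disjoint (univ.filter fun j : Fin n => f j < f i)
      (univ.filter fun j : Fin n => f j = f i ∧ j ≤ i) := by
    rw [Finset.disjoint_left]
    intro a ha hb
    simp only [Finset.mem_filter] at ha hb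
    exact absurd hb.2.1 (ne_of_lt ha.2)
  rw [← Finset.card_union_of_disjoint hd]
  calc _ ≤ (univ : Finset (Fin n)).card := Finset.card_le_univ _
    _ = n := by simp

lemma smono_eval (g : Fin ℓ → ℕ) (hg : ∀ i i' : Fin ℓ, i < i' → g i < g i')
    (hg1 : ∀ i, 1 ≤ g i) (hg2 : ∀ i, g i ≤ ℓ) (i : Fin ℓ) : g i = (i : ℕ) + 1 := by
  have step : ∀ s t : ℕ, (ht : t < ℓ) → (h : t + s < ℓ) → g ⟨t, ht⟩ + s ≤ g ⟨t + s, h⟩ := by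
    intro s
    induction s with
    | zero => intro t ht h; simp
    | succ s ih =>
      intro t ht h
      have h' : t + s < ℓ := by omega
      have h2 : (⟨t + s, h'⟩ : Fin ℓ) < ⟨t + (s + 1), h⟩ := by
        rw [Fin.mk_lt_mk]; omega
      have h3 := hg _ _ h2
      have h4 := ih t ht h'
      omega
  have hl : ℓ ≠ 0 := by have := i.isLt; omega
  have low : (i : ℕ) + 1 ≤ g i := by
    have ht0 : 0 < ℓ := by omega
    have h0 : 0 + (i : ℕ) < ℓ := by have := i.isLt; omega
    have hstep := step (i : ℕ) 0 ht0 h0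
    have e : (⟨0 + (i : ℕ), h0⟩ : Fin ℓ) = i := by ext; simp
    rw [e] at hstep
    have hb := hg1 ⟨0, ht0⟩
    omega
  have high : g i + (ℓ - 1 - (i : ℕ)) ≤ ℓ := by
    have hti : (i : ℕ) < ℓ := i.isLt
    have h0 : (i : ℕ) + (ℓ - 1 - (i : ℕ)) < ℓ := by omega
    have hstep := step (ℓ - 1 - (i : ℕ)) (i : ℕ) hti h0
    have e : (⟨(i : ℕ), hti⟩ : Fin ℓ) = i := Fin.eta i hti
    rw [e] at hstep
    have hb := hg2 ⟨(i : ℕ) + (ℓ - 1 - (i : ℕ)), h0⟩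
    omega
  have := i.isLt
  omega



lemma master {K K' : Type*} [LinearOrder K] [LinearOrder K'] {ℓ n : ℕ} (hn : ℓ + ℓ ≤ n)
    (zF : K) (zC : K') (fF : Fin ℓ → K) (fC : Fin ℓ → K')
    (keyF : Fin n → K) (keyC : Fin n → K')
    (hF : ∀ r : Fin n, keyF r = if h : (r : ℕ) < ℓ then fF ⟨(r : ℕ), h⟩ else zF)
    (hC : ∀ r : Fin n, keyC r = if h : (r : ℕ) < ℓ then fC ⟨(r : ℕ), h⟩ else zC)
    (hzF : ∀ i, zF < fF i) (hzC : ∀ i, zC ≤ fC i)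
    (hr : ∀ i i' : Fin ℓ, i < i' → rankOf fF i < rankOf fF i') :
    dMD (rankOf keyF) (rankOf keyC) =
      if ∀ i, fC i ≠ zC then
        univ.sup (fun i : Fin ℓ => (((i : ℕ) : ℤ) + 1 - (rankOf fC i : ℤ)).natAbs)
      else (n - ℓ) + (univ.filter (fun i : Fin ℓ => fC i = zC)).sup
          (fun i => (i : ℕ) + 1
            - (univ.filter fun i' : Fin ℓ => fC i' = zC ∧ i' ≤ i).card) := by
  have hn' : ℓ ≤ n := by omega
  have hfFr : ∀ i : Fin ℓ, rankOf fF i = (i : ℕ) + 1 :=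
    smono_eval (rankOf fF) hr (fun i => rankOf_pos i) (fun i => rankOf_le i)
  have rF : ∀ (r : Fin n) (i : Fin ℓ), (r : ℕ) = (i : ℕ) →
      rankOf keyF r = (n - ℓ) + ((i : ℕ) + 1) := by
    intro r i h
    rw [rank_clause hn' zF fF keyF hF r i h (hzF i), hfFr i]
  have rF0 : ∀ r : Fin n, ℓ ≤ (r : ℕ) → rankOf keyF r = (r : ℕ) - ℓ + 1 := by
    intro r hrr
    rw [rank_zero hn' zF fF keyF hF (fun i => (hzF i).le) r hrr]
    have he : (univ.filter fun i : Fin ℓ => fF i = zF) = ∅ := by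
      apply Finset.filter_eq_empty_iff.mpr
      exact fun i _ => fun hcon => absurd hcon.symm (ne_of_lt (hzF i))
    rw [he]
    simp
  set k := (univ.filter fun i : Fin ℓ => fC i = zC).card with hkdef
  have hkl : k ≤ ℓ := by
    calc k ≤ (univ : Finset (Fin ℓ)).card := Finset.card_le_univ _
      _ = ℓ := by simp
  set v : Fin ℓ → ℕ :=
    fun i => (univ.filter fun i' : Fin ℓ => fC i' = zC ∧ i' ≤ i).card with hvdef
  have hv1 : ∀ i : Fin ℓ, fC i = zC → 1 ≤ v i := by
    intro i hi
    apply Finset.card_pos.mpr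
    exact ⟨i, by simp [hi]⟩
  have hv2 : ∀ i : Fin ℓ, v i ≤ (i : ℕ) + 1 := by
    intro i
    calc v i ≤ (Finset.Iic i).card := by
          apply Finset.card_le_card
          intro x hx
          simp only [Finset.mem_filter] at hx
          simpa using hx.2.2
      _ = (i : ℕ) + 1 := Fin.card_Iic i
  have rC0 : ∀ r : Fin n, ℓ ≤ (r : ℕ) → rankOf keyC r = k + ((r : ℕ) - ℓ) + 1 :=
    fun r h => rank_zero hn' zC fC keyC hC hzC r h
  have rCv : ∀ (r : Fin n) (i : Fin ℓ), (r : ℕ) = (i : ℕ) → fC i = zC →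
      rankOf keyC r = v i :=
    fun r i h hv => rank_violated hn' zC fC keyC hC hzC r i h hv
  have rCs : ∀ (r : Fin n) (i : Fin ℓ), (r : ℕ) = (i : ℕ) → fC i ≠ zC →
      rankOf keyC r = (n - ℓ) + rankOf fC i :=
    fun r i h hne => rank_clause hn' zC fC keyC hC r i h
      (lt_of_le_of_ne (hzC i) (Ne.symm hne))
  split_ifs with hall
  · -- all clauses satisfied
    have hk0 : k = 0 := by
      rw [hkdef]
      apply Finset.card_eq_zero.mpr
      apply Finset.filter_eq_empty_iff.mpr
      exact fun i _ => hall i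
    unfold dMD
    apply le_antisymm
    · apply Finset.sup_le
      intro r _
      by_cases hrl : (r : ℕ) < ℓ
      · set i : Fin ℓ := ⟨(r : ℕ), hrl⟩ with hidef
        have h1 := rF r i rfl
        have h2 := rCs r i rfl (hall i)
        have h3 : ((((i : ℕ) : ℤ) + 1 - (rankOf fC i : ℤ)).natAbs)
            ≤ univ.sup (fun i : Fin ℓ => (((i : ℕ) : ℤ) + 1 - (rankOf fC i : ℤ)).natAbs) :=
          Finset.le_sup (f := fun i : Fin ℓ => (((i : ℕ) : ℤ) + 1 - (rankOf fC i : ℤ)).natAbs)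
            (Finset.mem_univ i)
        rw [h1, h2]
        have h4 := rankOf_le (f := fC) i
        have h5 := rankOf_pos (f := fC) i
        omega
      · rw [rF0 r (by omega), rC0 r (by omega), hk0]
        simp
    · apply Finset.sup_le
      intro i _
      have hrl : ((Fin.castLE hn' i : Fin n) : ℕ) = (i : ℕ) := rfl
      have h1 := rF (Fin.castLE hn' i) i hrl
      have h2 := rCs (Fin.castLE hn' i) i hrl (hall i)
      have h3 : ((rankOf keyF (Fin.castLE hn' i) : ℤ)
            - (rankOf keyC (Fin.castLE hn' i) : ℤ)).natAbs
          ≤ univ.sup (fun r : Fin n => ((rankOf keyF r : ℤ) - (rankOf keyC r : ℤ)).natAbs) :=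
        Finset.le_sup (f := fun r : Fin n => ((rankOf keyF r : ℤ) - (rankOf keyC r : ℤ)).natAbs)
          (Finset.mem_univ _)
      rw [h1, h2] at h3
      have h4 := rankOf_le (f := fC) i
      have h5 := rankOf_pos (f := fC) i
      omega
  · -- some violated clause
    push_neg at hall
    obtain ⟨i0, hi0⟩ := hall
    have hne : (univ.filter fun i : Fin ℓ => fC i = zC).Nonempty := ⟨i0, by simp [hi0]⟩
    obtain ⟨iw, hiw, hsup⟩ := Finset.exists_mem_eq_sup
      (univ.filter fun i : Fin ℓ => fC i = zC) hne
      (fun i => (i : ℕ) + 1 - v i)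
    have hiwz : fC iw = zC := (Finset.mem_filter.mp hiw).2
    set T := (univ.filter (fun i : Fin ℓ => fC i = zC)).sup
        (fun i => (i : ℕ) + 1 - v i) with hTdef
    unfold dMD
    apply le_antisymm
    · apply Finset.sup_le
      intro r _
      by_cases hrl : (r : ℕ) < ℓ
      · set i : Fin ℓ := ⟨(r : ℕ), hrl⟩ with hidef
        have h1 := rF r i rfl
        by_cases hz : fC i = zC
        · have h2 := rCv r i rfl hz
          have hT : (i : ℕ) + 1 - v i ≤ T :=
            Finset.le_sup (f := fun i : Fin ℓ => (i : ℕ) + 1 - v i)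
              (Finset.mem_filter.mpr ⟨Finset.mem_univ i, hz⟩)
          have := hv1 i hz
          have := hv2 i
          rw [h1, h2]
          omega
        · have h2 := rCs r i rfl hz
          have h4 := rankOf_le (f := fC) i
          have h5 := rankOf_pos (f := fC) i
          have hil := i.isLt
          rw [h1, h2]
          omega
      · rw [rF0 r (by omega), rC0 r (by omega)]
        omega
    · have hrl : ((Fin.castLE hn' iw : Fin n) : ℕ) = (iw : ℕ) := rfl
      have h1 := rF (Fin.castLE hn' iw) iw hrl
      have h2 := rCv (Fin.castLE hn' iw) iw hrl hiwz
      have h3 : ((rankOf keyF (Fin.castLE hn' iw) : ℤ)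
            - (rankOf keyC (Fin.castLE hn' iw) : ℤ)).natAbs
          ≤ univ.sup (fun r : Fin n => ((rankOf keyF r : ℤ) - (rankOf keyC r : ℤ)).natAbs) :=
        Finset.le_sup (f := fun r : Fin n => ((rankOf keyF r : ℤ) - (rankOf keyC r : ℤ)).natAbs)
          (Finset.mem_univ _)
      rw [h1, h2] at h3
      have := hv1 iw hiwz
      have := hv2 iw
      have hiwl := iw.isLt
      omega

lemma le_two_mul_add_one (ℓ : ℕ) : ℓ ≤ 2*ℓ+1 := by omega

lemma glue {K K' : Type*} [LinearOrder K] [LinearOrder K'] {ℓ : ℕ}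
    (zF : K) (zC : K') (fF : Fin ℓ → K) (fC : Fin ℓ → K')
    (key1 : Fin (2*ℓ+1) → K) (keyC1 : Fin (2*ℓ+1) → K')
    (key2 : Fin (2*ℓ+2) → K) (keyC2 : Fin (2*ℓ+2) → K')
    (hF1 : ∀ r : Fin (2*ℓ+1), key1 r = if h : (r : ℕ) < ℓ then fF ⟨(r : ℕ), h⟩ else zF)
    (hC1 : ∀ r : Fin (2*ℓ+1), keyC1 r = if h : (r : ℕ) < ℓ then fC ⟨(r : ℕ), h⟩ else zC)
    (hF2 : ∀ r : Fin (2*ℓ+2), key2 r = if h : (r : ℕ) < ℓ then fF ⟨(r : ℕ), h⟩ else zF)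
    (hC2 : ∀ r : Fin (2*ℓ+2), keyC2 r = if h : (r : ℕ) < ℓ then fC ⟨(r : ℕ), h⟩ else zC)
    (hzF : ∀ i, zF < fF i) (hzC : ∀ i, zC ≤ fC i)
    (h1 : ∀ i i' : Fin ℓ, i < i' →
      rankOf key1 (Fin.castLE (le_two_mul_add_one ℓ) i) <
        rankOf key1 (Fin.castLE (le_two_mul_add_one ℓ) i')) :
    (dMD (rankOf key2) (rankOf keyC2) : ℤ) - (dMD (rankOf key1) (rankOf keyC1) : ℤ)
      = if ∀ i, fC i ≠ zC then 0 else 1 := by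
  have hn1 : ℓ ≤ 2*ℓ+1 := by omega
  have hr : ∀ i i' : Fin ℓ, i < i' → rankOf fF i < rankOf fF i' := by
    intro i i' h
    have hlt := h1 i i' h
    rw [rank_clause hn1 zF fF key1 hF1 _ i rfl (hzF i),
        rank_clause hn1 zF fF key1 hF1 _ i' rfl (hzF i')] at hlt
    omega
  rw [master (by omega) zF zC fF fC key2 keyC2 hF2 hC2 hzF hzC hr,
      master (by omega) zF zC fF fC key1 keyC1 hF1 hC1 hzF hzC hr]
  by_cases hall : ∀ i, fC i ≠ zC
  · simp [hall]
  · simp only [hall, if_false]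
    have e2 : 2*ℓ+2-ℓ = ℓ+2 := by omega
    have e1 : 2*ℓ+1-ℓ = ℓ+1 := by omega
    rw [e1, e2]
    push_cast
    ring


lemma list_map_le {α : Type*} (s : List α) (f g : α → ℕ)
    (h : ∀ x ∈ s, f x ≤ g x) : s.map f ≤ s.map g := by
  induction s with
  | nil => simp
  | cons a t ih =>
    rcases lt_or_eq_of_le (h a List.mem_cons_self) with hlt | heq
    · exact le_of_lt (List.Lex.rel hlt)
    · rw [List.map_cons, List.map_cons, heq]
      exact List.cons_le_cons _ (ih fun x hx => h x (List.mem_cons_of_mem _ hx))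

lemma list_map_lt {α : Type*} (f g : α → ℕ) :
    ∀ s : List α, (∀ x ∈ s, f x ≤ g x) → ∀ x ∈ s, f x < g x →
      s.map f < s.map g := by
  intro s
  induction s with
  | nil => intro _ x hx; simp at hx
  | cons a t ih =>
    intro h x hx hfg
    rcases lt_or_eq_of_le (h a List.mem_cons_self) with hlt | heq
    · exact List.Lex.rel hlt
    · rw [List.map_cons, List.map_cons, heq]
      refine List.Lex.cons ?_
      rcases List.mem_cons.mp hx with rfl | hx'
      · exact absurd hfg (by omega)
      · exact ih (fun y hy => h y (List.mem_cons_of_mem _ hy)) x hx' hfg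

lemma key_sum (ℓ m n : ℕ) (D : Fin ℓ → Finset (Fin m)) (C : Finset (Fin m)) (r : Fin n) :
    sumKey (clauseMat ℓ m n D) C r
      = if h : (r : ℕ) < ℓ then ∑ j ∈ C, (if j ∈ D ⟨(r : ℕ), h⟩ then 1 else 0) else 0 := by
  unfold sumKey clauseMat
  by_cases h : (r : ℕ) < ℓ
  · rw [dif_pos h]
    exact Finset.sum_congr rfl fun j _ => dif_pos h
  · rw [dif_neg h]
    exact Finset.sum_eq_zero fun j _ => dif_neg h

lemma key_max (ℓ m n : ℕ) (D : Fin ℓ → Finset (Fin m)) (C : Finset (Fin m)) (r : Fin n) :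
    maxKey (clauseMat ℓ m n D) C r
      = if h : (r : ℕ) < ℓ then C.sup (fun j => if j ∈ D ⟨(r : ℕ), h⟩ then 1 else 0)
        else 0 := by
  unfold maxKey clauseMat
  by_cases h : (r : ℕ) < ℓ
  · rw [dif_pos h]
    exact Finset.sup_congr rfl fun j _ => dif_pos h
  · rw [dif_neg h]
    exact le_antisymm (Finset.sup_le fun j _ => le_of_eq (dif_neg h)) (Nat.zero_le _)

lemma key_lex (ℓ m n : ℕ) (D : Fin ℓ → Finset (Fin m)) (C : Finset (Fin m)) (r : Fin n) :
    lexKey (clauseMat ℓ m n D) C r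
      = if h : (r : ℕ) < ℓ then
          (C.sort (· ≤ ·)).map (fun j => if j ∈ D ⟨(r : ℕ), h⟩ then 1 else 0)
        else (C.sort (· ≤ ·)).map (fun _ => 0) := by
  unfold lexKey clauseMat
  by_cases h : (r : ℕ) < ℓ
  · rw [dif_pos h]
    exact List.map_congr_left fun j _ => dif_pos h
  · rw [dif_neg h]
    exact List.map_congr_left fun j _ => dif_neg h

lemma sum_eq_card {m : ℕ} (C E : Finset (Fin m)) :
    (∑ j ∈ C, (if j ∈ E then 1 else 0)) = (C ∩ E).card := by
  rw [← Finset.card_filter, Finset.filter_mem_eq_inter]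

theorem stmt_9 (ℓ m : ℕ) (D : Fin ℓ → Finset (Fin m)) (hD : ∀ i, (D i).Nonempty) :
    ((∀ i i' : Fin ℓ, i < i' →
        rankOf (sumKey (clauseMat ℓ m (2*ℓ+1) D) Finset.univ) (Fin.castLE (by omega) i) <
        rankOf (sumKey (clauseMat ℓ m (2*ℓ+1) D) Finset.univ) (Fin.castLE (by omega) i')) →
     (∀ i i' : Fin ℓ, i < i' →
        rankOf (sumKey (clauseMat ℓ m (2*ℓ+2) D) Finset.univ) (Fin.castLE (by omega) i) <
        rankOf (sumKey (clauseMat ℓ m (2*ℓ+2) D) Finset.univ) (Fin.castLE (by omega) i')) →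
     ∀ C : Finset (Fin m),
       ((dMD (rankOf (sumKey (clauseMat ℓ m (2*ℓ+2) D) Finset.univ))
             (rankOf (sumKey (clauseMat ℓ m (2*ℓ+2) D) C)) : ℤ) -
        (dMD (rankOf (sumKey (clauseMat ℓ m (2*ℓ+1) D) Finset.univ))
             (rankOf (sumKey (clauseMat ℓ m (2*ℓ+1) D) C)) : ℤ))
         = if ∀ i : Fin ℓ, (C ∩ D i).Nonempty then 0 else 1) ∧
    ((∀ i i' : Fin ℓ, i < i' →
        rankOf (maxKey (clauseMat ℓ m (2*ℓ+1) D) Finset.univ) (Fin.castLE (by omega) i) <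
        rankOf (maxKey (clauseMat ℓ m (2*ℓ+1) D) Finset.univ) (Fin.castLE (by omega) i')) →
     (∀ i i' : Fin ℓ, i < i' →
        rankOf (maxKey (clauseMat ℓ m (2*ℓ+2) D) Finset.univ) (Fin.castLE (by omega) i) <
        rankOf (maxKey (clauseMat ℓ m (2*ℓ+2) D) Finset.univ) (Fin.castLE (by omega) i')) →
     ∀ C : Finset (Fin m),
       ((dMD (rankOf (maxKey (clauseMat ℓ m (2*ℓ+2) D) Finset.univ))
             (rankOf (maxKey (clauseMat ℓ m (2*ℓ+2) D) C)) : ℤ) -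
        (dMD (rankOf (maxKey (clauseMat ℓ m (2*ℓ+1) D) Finset.univ))
             (rankOf (maxKey (clauseMat ℓ m (2*ℓ+1) D) C)) : ℤ))
         = if ∀ i : Fin ℓ, (C ∩ D i).Nonempty then 0 else 1) ∧
    ((∀ i i' : Fin ℓ, i < i' →
        rankOf (lexKey (clauseMat ℓ m (2*ℓ+1) D) Finset.univ) (Fin.castLE (by omega) i) <
        rankOf (lexKey (clauseMat ℓ m (2*ℓ+1) D) Finset.univ) (Fin.castLE (by omega) i')) →
     (∀ i i' : Fin ℓ, i < i' →
        rankOf (lexKey (clauseMat ℓ m (2*ℓ+2) D) Finset.univ) (Fin.castLE (by omega) i) <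
        rankOf (lexKey (clauseMat ℓ m (2*ℓ+2) D) Finset.univ) (Fin.castLE (by omega) i')) →
     ∀ C : Finset (Fin m),
       ((dMD (rankOf (lexKey (clauseMat ℓ m (2*ℓ+2) D) Finset.univ))
             (rankOf (lexKey (clauseMat ℓ m (2*ℓ+2) D) C)) : ℤ) -
        (dMD (rankOf (lexKey (clauseMat ℓ m (2*ℓ+1) D) Finset.univ))
             (rankOf (lexKey (clauseMat ℓ m (2*ℓ+1) D) C)) : ℤ))
         = if ∀ i : Fin ℓ, (C ∩ D i).Nonempty then 0 else 1) := by
  refine ⟨?_, ?_, ?_⟩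
  · -- sum ranking
    intro h1 _ C
    have hglue := glue (ℓ := ℓ) (0 : ℕ) (0 : ℕ)
      (fun i : Fin ℓ => ∑ j ∈ (univ : Finset (Fin m)), (if j ∈ D i then 1 else 0))
      (fun i : Fin ℓ => ∑ j ∈ C, (if j ∈ D i then 1 else 0))
      (sumKey (clauseMat ℓ m (2*ℓ+1) D) univ) (sumKey (clauseMat ℓ m (2*ℓ+1) D) C)
      (sumKey (clauseMat ℓ m (2*ℓ+2) D) univ) (sumKey (clauseMat ℓ m (2*ℓ+2) D) C)
      (fun r => key_sum ℓ m _ D univ r) (fun r => key_sum ℓ m _ D C r)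
      (fun r => key_sum ℓ m _ D univ r) (fun r => key_sum ℓ m _ D C r)
      ?_ (fun i => Nat.zero_le _) h1
    · have hiff : (∀ i : Fin ℓ, (fun i : Fin ℓ => ∑ j ∈ C, (if j ∈ D i then 1 else 0)) i ≠ 0)
          ↔ (∀ i : Fin ℓ, (C ∩ D i).Nonempty) := by
        apply forall_congr'
        intro i
        show (∑ j ∈ C, (if j ∈ D i then 1 else 0)) ≠ 0 ↔ _
        rw [sum_eq_card C (D i)]
        constructor
        · intro h
          exact Finset.nonempty_of_ne_empty (fun he => h (by rw [he]; simp))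
        · intro h hc
          exact absurd (Finset.card_eq_zero.mp hc) (Finset.nonempty_iff_ne_empty.mp h)
      by_cases hsat : ∀ i : Fin ℓ, (C ∩ D i).Nonempty
      · rw [if_pos (hiff.mpr hsat)] at hglue
        rw [if_pos hsat]
        exact hglue
      · rw [if_neg (fun hc => hsat (hiff.mp hc))] at hglue
        rw [if_neg hsat]
        exact hglue
    · intro i
      show 0 < ∑ j ∈ (univ : Finset (Fin m)), (if j ∈ D i then 1 else 0)
      rw [sum_eq_card (univ : Finset (Fin m)) (D i), Finset.univ_inter]
      exact Finset.card_pos.mpr (hD i)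
  · -- max ranking
    intro h1 _ C
    have hglue := glue (ℓ := ℓ) (0 : ℕ) (0 : ℕ)
      (fun i : Fin ℓ => (univ : Finset (Fin m)).sup (fun j => if j ∈ D i then 1 else 0))
      (fun i : Fin ℓ => C.sup (fun j => if j ∈ D i then 1 else 0))
      (maxKey (clauseMat ℓ m (2*ℓ+1) D) univ) (maxKey (clauseMat ℓ m (2*ℓ+1) D) C)
      (maxKey (clauseMat ℓ m (2*ℓ+2) D) univ) (maxKey (clauseMat ℓ m (2*ℓ+2) D) C)
      (fun r => key_max ℓ m _ D univ r) (fun r => key_max ℓ m _ D C r)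
      (fun r => key_max ℓ m _ D univ r) (fun r => key_max ℓ m _ D C r)
      ?_ (fun i => Nat.zero_le _) h1
    · have hiff : (∀ i : Fin ℓ,
            (fun i : Fin ℓ => C.sup (fun j => if j ∈ D i then 1 else 0)) i ≠ 0)
          ↔ (∀ i : Fin ℓ, (C ∩ D i).Nonempty) := by
        apply forall_congr'
        intro i
        show C.sup (fun j => if j ∈ D i then 1 else 0) ≠ 0 ↔ _
        constructor
        · intro h
          by_contra hemp
          apply h
          refine le_antisymm (Finset.sup_le ?_) (Nat.zero_le _)
          intro j hj
          have hjD : j ∉ D i := fun hjD => hemp ⟨j, Finset.mem_inter.mpr ⟨hj, hjD⟩⟩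
          simp [hjD]
        · rintro ⟨x, hx⟩ h0
          rw [Finset.mem_inter] at hx
          have hle : (if x ∈ D i then 1 else 0)
              ≤ C.sup (fun j => if j ∈ D i then 1 else 0) :=
            Finset.le_sup (f := fun j => if j ∈ D i then 1 else 0) hx.1
          rw [if_pos hx.2, h0] at hle
          omega
      by_cases hsat : ∀ i : Fin ℓ, (C ∩ D i).Nonempty
      · rw [if_pos (hiff.mpr hsat)] at hglue
        rw [if_pos hsat]
        exact hglue
      · rw [if_neg (fun hc => hsat (hiff.mp hc))] at hglue
        rw [if_neg hsat]
        exact hglue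
    · intro i
      show 0 < (univ : Finset (Fin m)).sup (fun j => if j ∈ D i then 1 else 0)
      obtain ⟨j, hj⟩ := hD i
      have hle : (if j ∈ D i then 1 else 0)
          ≤ (univ : Finset (Fin m)).sup (fun j => if j ∈ D i then 1 else 0) :=
        Finset.le_sup (f := fun j => if j ∈ D i then 1 else 0) (Finset.mem_univ j)
      rw [if_pos hj] at hle
      exact lt_of_lt_of_le Nat.zero_lt_one hle
  · -- lex ranking
    intro h1 _ C
    have hglue := glue (ℓ := ℓ)
      (((univ : Finset (Fin m)).sort (· ≤ ·)).map (fun _ => (0 : ℕ)))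
      ((C.sort (· ≤ ·)).map (fun _ => (0 : ℕ)))
      (fun i : Fin ℓ => ((univ : Finset (Fin m)).sort (· ≤ ·)).map
        (fun j => if j ∈ D i then 1 else 0))
      (fun i : Fin ℓ => (C.sort (· ≤ ·)).map (fun j => if j ∈ D i then 1 else 0))
      (lexKey (clauseMat ℓ m (2*ℓ+1) D) univ) (lexKey (clauseMat ℓ m (2*ℓ+1) D) C)
      (lexKey (clauseMat ℓ m (2*ℓ+2) D) univ) (lexKey (clauseMat ℓ m (2*ℓ+2) D) C)
      (fun r => key_lex ℓ m _ D univ r) (fun r => key_lex ℓ m _ D C r)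
      (fun r => key_lex ℓ m _ D univ r) (fun r => key_lex ℓ m _ D C r)
      ?_ ?_ h1
    · have hiff : (∀ i : Fin ℓ,
            (fun i : Fin ℓ => (C.sort (· ≤ ·)).map (fun j => if j ∈ D i then 1 else 0)) i
              ≠ (C.sort (· ≤ ·)).map (fun _ => 0))
          ↔ (∀ i : Fin ℓ, (C ∩ D i).Nonempty) := by
        apply forall_congr'
        intro i
        show (C.sort (· ≤ ·)).map (fun j => if j ∈ D i then 1 else 0)
            ≠ (C.sort (· ≤ ·)).map (fun _ => 0) ↔ _
        constructor
        · intro h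
          by_contra hemp
          apply h
          apply List.map_inj_left.mpr
          intro a ha
          have haD : a ∉ D i :=
            fun haD => hemp ⟨a, Finset.mem_inter.mpr ⟨(Finset.mem_sort _).mp ha, haD⟩⟩
          simp [haD]
        · rintro ⟨x, hx⟩ heq
          rw [Finset.mem_inter] at hx
          have hx0 := List.map_inj_left.mp heq x ((Finset.mem_sort _).mpr hx.1)
          rw [if_pos hx.2] at hx0
          omega
      by_cases hsat : ∀ i : Fin ℓ, (C ∩ D i).Nonempty
      · rw [if_pos (hiff.mpr hsat)] at hglue
        rw [if_pos hsat]
        exact hglue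
      · rw [if_neg (fun hc => hsat (hiff.mp hc))] at hglue
        rw [if_neg hsat]
        exact hglue
    · intro i
      show ((univ : Finset (Fin m)).sort (· ≤ ·)).map (fun _ => 0)
          < ((univ : Finset (Fin m)).sort (· ≤ ·)).map (fun j => if j ∈ D i then 1 else 0)
      obtain ⟨j, hj⟩ := hD i
      exact list_map_lt (fun _ => 0) (fun j => if j ∈ D i then 1 else 0)
        ((univ : Finset (Fin m)).sort (· ≤ ·)) (fun x _ => Nat.zero_le _)
        j ((Finset.mem_sort _).mpr (Finset.mem_univ j)) (by simp [hj])
    · intro i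
      show (C.sort (· ≤ ·)).map (fun _ => 0)
          ≤ (C.sort (· ≤ ·)).map (fun j => if j ∈ D i then 1 else 0)
      exact list_map_le ((C.sort (· ≤ ·))) (fun _ => 0)
        (fun j => if j ∈ D i then 1 else 0) (fun x _ => Nat.zero_le _)
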